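/- For all real α with 0 ≤ α ≤ π, α − sin(α/2) + 2·sin(α) ≤ π. -/

import Mathlib

open Real

lemma aux_sin_ge (x : ℝ) (hx : 0 ≤ x) : x - x ^ 3 / 6 ≤ Real.sin x := by
  have hd : ∀ y : ℝ, HasDerivAt (fun y : ℝ => Real.sin y - (y - y ^ 3 / 6))
      (Real.cos y - (1 - y ^ 2 / 2)) y := by
    intro y
    have h1 := (Real.hasDerivAt_sin y).sub
      ((hasDerivAt_id y).sub ((hasDerivAt_pow 3 y).div_const 6))
    refine h1.congr_deriv ?_
    ring
  have key : MonotoneOn (fun y : ℝ => Real.sin y - (y - y ^ 3 / 6)) (Set.Ici 0) := by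
    apply monotoneOn_of_deriv_nonneg (convex_Ici 0)
    · exact Continuous.continuousOn (by continuity)
    · intro y hy
      exact (hd y).differentiableAt.differentiableWithinAt
    · intro y hy
      rw [(hd y).deriv]
      have := Real.one_sub_sq_div_two_le_cos (x := y)
      linarith
  have h0 : (0 : ℝ) ∈ Set.Ici (0 : ℝ) := Set.mem_Ici.2 le_rfl
  have hx' : x ∈ Set.Ici (0 : ℝ) := Set.mem_Ici.2 hx
  have := key h0 hx' hx
  simp only [Real.sin_zero] at this
  norm_num at this
  linarith

lemma aux_cos_le (x : ℝ) (hx : 0 ≤ x) : Real.cos x ≤ 1 - x ^ 2 / 2 + x ^ 4 / 24 := by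
  have hd : ∀ y : ℝ, HasDerivAt (fun y : ℝ => (1 - y ^ 2 / 2 + y ^ 4 / 24) - Real.cos y)
      (Real.sin y - (y - y ^ 3 / 6)) y := by
    intro y
    have h1 := ((((hasDerivAt_pow 2 y).div_const 2).const_sub 1).add
      ((hasDerivAt_pow 4 y).div_const 24)).sub (Real.hasDerivAt_cos y)
    refine h1.congr_deriv ?_
    ring
  have key : MonotoneOn (fun y : ℝ => (1 - y ^ 2 / 2 + y ^ 4 / 24) - Real.cos y)
      (Set.Ici 0) := by
    apply monotoneOn_of_deriv_nonneg (convex_Ici 0)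
    · exact Continuous.continuousOn (by continuity)
    · intro y hy
      exact (hd y).differentiableAt.differentiableWithinAt
    · intro y hy
      rw [(hd y).deriv]
      have hy0 : 0 ≤ y := le_of_lt (by simpa using hy)
      have := aux_sin_ge y hy0
      linarith
  have h0 : (0 : ℝ) ∈ Set.Ici (0 : ℝ) := Set.mem_Ici.2 le_rfl
  have hx' : x ∈ Set.Ici (0 : ℝ) := Set.mem_Ici.2 hx
  have := key h0 hx' hx
  simp only [Real.cos_zero] at this
  norm_num at this
  linarith

lemma aux_sin_le (x : ℝ) (hx : 0 ≤ x) : Real.sin x ≤ x - x ^ 3 / 6 + x ^ 5 / 120 := by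
  have hd : ∀ y : ℝ, HasDerivAt (fun y : ℝ => (y - y ^ 3 / 6 + y ^ 5 / 120) - Real.sin y)
      ((1 - y ^ 2 / 2 + y ^ 4 / 24) - Real.cos y) y := by
    intro y
    have h1 := (((hasDerivAt_id y).sub ((hasDerivAt_pow 3 y).div_const 6)).add
      ((hasDerivAt_pow 5 y).div_const 120)).sub (Real.hasDerivAt_sin y)
    refine h1.congr_deriv ?_
    ring
  have key : MonotoneOn (fun y : ℝ => (y - y ^ 3 / 6 + y ^ 5 / 120) - Real.sin y)
      (Set.Ici 0) := by
    apply monotoneOn_of_deriv_nonneg (convex_Ici 0)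
    · exact Continuous.continuousOn (by continuity)
    · intro y hy
      exact (hd y).differentiableAt.differentiableWithinAt
    · intro y hy
      rw [(hd y).deriv]
      have hy0 : 0 ≤ y := le_of_lt (by simpa using hy)
      have := aux_cos_le y hy0
      linarith
  have h0 : (0 : ℝ) ∈ Set.Ici (0 : ℝ) := Set.mem_Ici.2 le_rfl
  have hx' : x ∈ Set.Ici (0 : ℝ) := Set.mem_Ici.2 hx
  have := key h0 hx' hx
  simp only [Real.sin_zero] at this
  norm_num at this
  linarith

theorem stmt7 (α : ℝ) (h0 : 0 ≤ α) (h1 : α ≤ π) :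
    α - sin (α / 2) + 2 * sin α ≤ π := by
  have hs : α / 2 - (α / 2) ^ 3 / 6 ≤ Real.sin (α / 2) :=
    aux_sin_ge (α / 2) (by linarith)
  rcases le_or_gt α 3 with hc | hc
  · have hu : Real.sin α ≤ α - α ^ 3 / 6 + α ^ 5 / 120 := aux_sin_le α h0
    have hpi : π > 3.141592 := Real.pi_gt_d6
    nlinarith [sq_nonneg α, sq_nonneg (α - 3), sq_nonneg (α - 2), sq_nonneg (α + 3),
      mul_nonneg h0 h0, mul_nonneg (mul_nonneg h0 h0) h0,
      mul_nonneg (sub_nonneg.2 hc) (mul_nonneg h0 h0),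
      mul_nonneg (mul_nonneg (sub_nonneg.2 hc) (sub_nonneg.2 hc)) h0,
      mul_nonneg (mul_nonneg (sub_nonneg.2 hc) (sub_nonneg.2 hc)) (mul_nonneg h0 h0)]
  · have hu : Real.sin α ≤ π - α := by
      have : Real.sin (π - α) ≤ π - α := Real.sin_le (by linarith)
      rwa [Real.sin_pi_sub] at this
    have hpi : π < 3.15 := by
      have := Real.pi_lt_d2
      linarith
    nlinarith [hs, hu, sq_nonneg α]
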